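/- Attainment of the nuclear-norm factorization bound: for any A ∈ ℝ^{M×N} with rank(A) ≤ P, there exist C ∈ ℝ^{M×P} and B ∈ ℝ^{N×P} with A = C Bᵀ and (1/2)(‖B‖_F² + ‖C‖_F²) = ‖A‖_*; such a factorization is obtained from the singular value decomposition A = U Σ Vᵀ by taking C = U Σ^{1/2} and B = V Σ^{1/2}. Consequently, ‖A‖_* = min{(1/2)(‖B‖_F² + ‖C‖_F²) : A = C Bᵀ, C ∈ ℝ^{M×P}, B ∈ ℝ^{N×P}}. -/

import Mathlib

set_option maxHeartbeats 1000000


open Matrix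

/-- Squared Frobenius norm of a real matrix: `∑_{i,j} M_{ij}²`. -/
def frobSq {m n : ℕ} (X : Matrix (Fin m) (Fin n) ℝ) : ℝ :=
  ∑ i, ∑ j, (X i j) ^ 2

/-- Nuclear norm of a real matrix: the trace of the positive semidefinite
square root of `AᴴA = AᵀA` (i.e., the sum of singular values of `A`). -/
noncomputable def nuclearNorm {m n : ℕ} (A : Matrix (Fin m) (Fin n) ℝ) : ℝ :=
  let hA := Matrix.posSemidef_conjTranspose_mul_self A
  ((hA.1.eigenvectorUnitary : Matrix (Fin n) (Fin n) ℝ) *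
    diagonal ((RCLike.ofReal : ℝ → ℝ) ∘ Real.sqrt ∘ hA.1.eigenvalues) *
    (star hA.1.eigenvectorUnitary : Matrix (Fin n) (Fin n) ℝ)).trace

-- helper 1: trace of unitary conjugation of diagonal
lemma trace_unit_conj {n : ℕ} (W : Matrix.unitaryGroup (Fin n) ℝ) (d : Fin n → ℝ) :
    Matrix.trace ((W : Matrix (Fin n) (Fin n) ℝ) * diagonal d * star (W : Matrix (Fin n) (Fin n) ℝ)) = ∑ j, d j := by
  rw [trace_mul_cycle, mem_unitaryGroup_iff'.mp W.2, one_mul, trace_diagonal]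

-- helper 2: embedding sum
lemma sum_embed {α : Type*} [Fintype α] [DecidableEq α] {P : ℕ} (e : α ↪ Fin P) (f g : α → ℝ) :
    ∑ p, (∑ j, if e j = p then f j else 0) * (∑ j, if e j = p then g j else 0)
      = ∑ j, f j * g j := by
  rw [← Finset.sum_subset (Finset.subset_univ (Finset.univ.map e))]
  · rw [Finset.sum_map]
    refine Finset.sum_congr rfl fun j _ => ?_
    have h : ∀ h : α → ℝ, (∑ j', if e j' = e j then h j' else 0) = h j := by
      intro h
      rw [Finset.sum_congr rfl (fun j' _ => if_congr e.injective.eq_iff rfl rfl)]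
      simp [Finset.sum_ite_eq' Finset.univ j h]
    rw [h f, h g]
  · intro p _ hp
    have : ∀ j : α, ¬ (e j = p) := fun j hj => hp (Finset.mem_map.mpr ⟨j, Finset.mem_univ _, hj⟩)
    simp [this]

-- helper 3
lemma dot_mulVec_mulVec {m n : ℕ} (A : Matrix (Fin m) (Fin n) ℝ) (x y : Fin n → ℝ) :
    (A *ᵥ x) ⬝ᵥ (A *ᵥ y) = x ⬝ᵥ ((Aᵀ * A) *ᵥ y) := by
  rw [← mulVec_mulVec, dotProduct_mulVec x, vecMul_transpose]

-- helper 4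
lemma dot_le_half {n : ℕ} (x y : Fin n → ℝ) :
    x ⬝ᵥ y ≤ (1/2) * (x ⬝ᵥ x + y ⬝ᵥ y) := by
  have h : (0:ℝ) ≤ (x - y) ⬝ᵥ (x - y) := by
    apply Finset.sum_nonneg; intro i _
    exact mul_self_nonneg _
  simp only [dotProduct, Pi.sub_apply, sub_mul, mul_sub, Finset.sum_sub_distrib] at h ⊢
  have e1 : ∑ i, y i * x i = ∑ i, x i * y i := Finset.sum_congr rfl fun i _ => mul_comm _ _
  rw [e1] at h
  linarith

-- helper 5: trace of X * Xᵀ nonneg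
lemma trace_mul_transpose_nonneg {m n : ℕ} (X : Matrix (Fin m) (Fin n) ℝ) :
    0 ≤ Matrix.trace (X * Xᵀ) := by
  simp only [Matrix.trace, Matrix.diag, mul_apply, transpose_apply]
  apply Finset.sum_nonneg; intro i _
  apply Finset.sum_nonneg; intro k _
  exact mul_self_nonneg _

-- helper 6: (Cᵀ *ᵥ x) ⬝ᵥ (Bᵀ *ᵥ y) = x ⬝ᵥ ((C * Bᵀ) *ᵥ y)
lemma dot_fact {m n p : ℕ} (C : Matrix (Fin m) (Fin p) ℝ) (B : Matrix (Fin n) (Fin p) ℝ)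
    (x : Fin m → ℝ) (y : Fin n → ℝ) :
    (Cᵀ *ᵥ x) ⬝ᵥ (Bᵀ *ᵥ y) = x ⬝ᵥ ((C * Bᵀ) *ᵥ y) := by
  rw [← mulVec_mulVec, dotProduct_mulVec x, mulVec_transpose, ← dotProduct_mulVec]

-- more helpers
lemma trace_mul_transpose_self {m n : ℕ} (X : Matrix (Fin m) (Fin n) ℝ) :
    Matrix.trace (X * Xᵀ) = frobSq X := by
  simp only [Matrix.trace, Matrix.diag, mul_apply, transpose_apply, frobSq, pow_two]

lemma sum_quadform {n m : ℕ} (V : Matrix (Fin n) (Fin m) ℝ) (G : Matrix (Fin n) (Fin n) ℝ) :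
    ∑ j, (fun i => V i j) ⬝ᵥ (G *ᵥ (fun i => V i j)) = Matrix.trace (Vᵀ * G * V) := by
  simp only [Matrix.trace, Matrix.diag, mul_apply, transpose_apply, mulVec, dotProduct,
    Finset.mul_sum, Finset.sum_mul]
  refine Finset.sum_congr rfl fun j _ => ?_
  rw [Finset.sum_comm]
  refine Finset.sum_congr rfl fun i _ => Finset.sum_congr rfl fun l _ => by ring

lemma trace_mul_vecMulVec {n : ℕ} (G : Matrix (Fin n) (Fin n) ℝ) (x : Fin n → ℝ) :
    Matrix.trace (G * vecMulVec x x) = x ⬝ᵥ (G *ᵥ x) := by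
  simp only [Matrix.trace, Matrix.diag, mul_apply, vecMulVec_apply, dotProduct, mulVec,
    Finset.mul_sum]
  refine Finset.sum_congr rfl fun i _ => Finset.sum_congr rfl fun l _ => by ring

lemma vecMulVec_mul_vecMulVec {n m p : ℕ} (x : Fin n → ℝ) (y z : Fin m → ℝ) (w : Fin p → ℝ) :
    vecMulVec x y * vecMulVec z w = (y ⬝ᵥ z) • vecMulVec x w := by
  ext i k
  simp only [mul_apply, vecMulVec_apply, Matrix.smul_apply, smul_eq_mul, dotProduct, Finset.sum_mul]
  refine Finset.sum_congr rfl fun l _ => by ring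

lemma vecMulVec_self_transpose {n : ℕ} (x : Fin n → ℝ) :
    (vecMulVec x x)ᵀ = vecMulVec x x := by
  ext i k; simp [vecMulVec_apply, mul_comm]

lemma sum_subtype_ext {n : ℕ} (q : Fin n → Prop) [DecidablePred q] (F : Fin n → ℝ)
    (h0 : ∀ j, ¬ q j → F j = 0) : ∑ j : {j // q j}, F j.1 = ∑ j, F j := by
  have h1 : ∑ a ∈ Finset.univ.filter q, F a = ∑ a : {j // q j}, F a :=
    Finset.sum_subtype _ (by simp) F
  rw [← h1]
  exact Finset.sum_subset (Finset.filter_subset _ _) (fun x _ hx => h0 x (by simpa using hx))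

lemma sum_subtype_le {n : ℕ} (q : Fin n → Prop) [DecidablePred q] (F : Fin n → ℝ)
    (h0 : ∀ j, 0 ≤ F j) : ∑ j : {j // q j}, F j.1 ≤ ∑ j, F j := by
  have h1 : ∑ a ∈ Finset.univ.filter q, F a = ∑ a : {j // q j}, F a :=
    Finset.sum_subtype _ (by simp) F
  rw [← h1]
  exact Finset.sum_le_sum_of_subset_of_nonneg (Finset.filter_subset _ _)
    (fun x _ _ => h0 x)

section core
variable {M N P : ℕ} (A : Matrix (Fin M) (Fin N) ℝ) (V : Matrix (Fin N) (Fin N) ℝ)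
  (μ : Fin N → ℝ)

lemma dotV (hVV : Vᵀ * V = 1) (j j' : Fin N) :
    (fun i => V i j) ⬝ᵥ (fun i => V i j') = if j = j' then (1:ℝ) else 0 := by
  have h : (Vᵀ * V) j j' = (fun i => V i j) ⬝ᵥ (fun i => V i j') := by
    simp [mul_apply, dotProduct]
  rw [← h, hVV, one_apply]

lemma dotAV (hVV : Vᵀ * V = 1)
    (heig : ∀ j, (Aᵀ * A) *ᵥ (fun i => V i j) = μ j • (fun i => V i j)) (j j' : Fin N) :
    (A *ᵥ (fun i => V i j)) ⬝ᵥ (A *ᵥ (fun i => V i j')) = if j = j' then μ j else 0 := by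
  rw [dot_mulVec_mulVec, heig j', dotProduct_smul, dotV V hVV, smul_eq_mul]
  by_cases h : j = j' <;> simp [h]

lemma core_exists (hVV : Vᵀ * V = 1) (hVV' : V * Vᵀ = 1) (hμ : ∀ j, 0 ≤ μ j)
    (heig : ∀ j, (Aᵀ * A) *ᵥ (fun i => V i j) = μ j • (fun i => V i j))
    (hcard : Fintype.card {j // μ j ≠ 0} ≤ P) :
    ∃ (C : Matrix (Fin M) (Fin P) ℝ) (B : Matrix (Fin N) (Fin P) ℝ),
      A = C * Bᵀ ∧ (1/2) * (frobSq B + frobSq C) = ∑ j, Real.sqrt (μ j) := by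
  classical
  set σ : Fin N → ℝ := fun j => Real.sqrt (μ j) with hσ
  set τ : Fin N → ℝ := fun j => Real.sqrt (σ j) with hτ
  obtain ⟨e⟩ : Nonempty ({j // μ j ≠ 0} ↪ Fin P) :=
    Function.Embedding.nonempty_of_card_le (by simpa using hcard)
  have hσpos : ∀ j : Fin N, μ j ≠ 0 → 0 < σ j :=
    fun j hj => Real.sqrt_pos.mpr (lt_of_le_of_ne (hμ j) (Ne.symm hj))
  have hτpos : ∀ j, μ j ≠ 0 → 0 < τ j := fun j hj => Real.sqrt_pos.mpr (hσpos j hj)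
  have hτsq : ∀ j, τ j ^ 2 = σ j := fun j => Real.sq_sqrt (Real.sqrt_nonneg _)
  have hσsq : ∀ j, σ j ^ 2 = μ j := fun j => Real.sq_sqrt (hμ j)
  have hAv0 : ∀ j, μ j = 0 → A *ᵥ (fun l => V l j) = 0 := by
    intro j hj
    have := dotAV A V μ hVV heig j j
    rw [if_pos rfl, hj] at this
    exact (dotProduct_self_eq_zero).mp this
  refine ⟨fun i p => ∑ j : {j // μ j ≠ 0}, if e j = p then (A *ᵥ (fun l => V l j.1)) i / τ j.1 else 0,
      fun k p => ∑ j : {j // μ j ≠ 0}, if e j = p then τ j.1 * V k j.1 else 0, ?_, ?_⟩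
  · ext i k
    erw [mul_apply]
    show A i k = ∑ p, (∑ j : {j // μ j ≠ 0}, if e j = p then (A *ᵥ (fun l => V l j.1)) i / τ j.1 else 0) * (∑ j : {j // μ j ≠ 0}, if e j = p then τ j.1 * V k j.1 else 0)
    rw [sum_embed e]
    have h2 : ∀ j : {j // μ j ≠ 0},
        (A *ᵥ (fun l => V l j.1)) i / τ j.1 * (τ j.1 * V k j.1)
          = (A *ᵥ (fun l => V l j.1)) i * V k j.1 := by
      intro j
      have ht := (hτpos j.1 j.2).ne'
      field_simp
    rw [Finset.sum_congr rfl fun j _ => h2 j]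
    rw [sum_subtype_ext (fun j => μ j ≠ 0) (fun j => (A *ᵥ (fun l => V l j)) i * V k j)
      (by intro j hj; show (A *ᵥ (fun l => V l j)) i * V k j = 0; rw [hAv0 j (not_not.mp hj)]; simp)]
    symm
    have h3 : ∀ j, (A *ᵥ (fun l => V l j)) i = (A * V) i j := by
      intro j; simp [mul_apply, mulVec, dotProduct]
    calc ∑ j, (A *ᵥ (fun l => V l j)) i * V k j
        = ∑ j, (A * V) i j * Vᵀ j k := by
          refine Finset.sum_congr rfl fun j _ => ?_; rw [h3, transpose_apply]
      _ = ((A * V) * Vᵀ) i k := (mul_apply).symm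
      _ = A i k := by rw [Matrix.mul_assoc, hVV']; simp
  · simp only [frobSq]
    have hB : (∑ k, ∑ p, (∑ j : {j // μ j ≠ 0}, if e j = p then τ j.1 * V k j.1 else 0)^2)
        = ∑ j : {j // μ j ≠ 0}, σ j.1 := by
      calc ∑ k, ∑ p, (∑ j : {j // μ j ≠ 0}, if e j = p then τ j.1 * V k j.1 else 0)^2
          = ∑ k, ∑ j : {j // μ j ≠ 0}, (τ j.1 * V k j.1) * (τ j.1 * V k j.1) := by
            refine Finset.sum_congr rfl fun k _ => ?_
            simp only [pow_two]
            exact sum_embed e _ _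
        _ = ∑ j : {j // μ j ≠ 0}, ∑ k, (τ j.1 * V k j.1) * (τ j.1 * V k j.1) :=
            Finset.sum_comm
        _ = ∑ j : {j // μ j ≠ 0}, σ j.1 := by
            refine Finset.sum_congr rfl fun j _ => ?_
            have h4 : ∑ k, (τ j.1 * V k j.1) * (τ j.1 * V k j.1)
                = (τ j.1)^2 * ((fun i => V i j.1) ⬝ᵥ (fun i => V i j.1)) := by
              simp only [dotProduct, Finset.mul_sum]
              exact Finset.sum_congr rfl fun k _ => by ring
            rw [h4, hτsq, dotV V hVV, if_pos rfl, mul_one]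
    have hC : (∑ i, ∑ p, (∑ j : {j // μ j ≠ 0}, if e j = p then (A *ᵥ (fun l => V l j.1)) i / τ j.1 else 0)^2)
        = ∑ j : {j // μ j ≠ 0}, σ j.1 := by
      calc ∑ i, ∑ p, (∑ j : {j // μ j ≠ 0}, if e j = p then (A *ᵥ (fun l => V l j.1)) i / τ j.1 else 0)^2
          = ∑ i, ∑ j : {j // μ j ≠ 0}, ((A *ᵥ (fun l => V l j.1)) i / τ j.1) * ((A *ᵥ (fun l => V l j.1)) i / τ j.1) := by
            refine Finset.sum_congr rfl fun i _ => ?_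
            simp only [pow_two]
            exact sum_embed e _ _
        _ = ∑ j : {j // μ j ≠ 0}, ∑ i, ((A *ᵥ (fun l => V l j.1)) i / τ j.1) * ((A *ᵥ (fun l => V l j.1)) i / τ j.1) :=
            Finset.sum_comm
        _ = ∑ j : {j // μ j ≠ 0}, σ j.1 := by
            refine Finset.sum_congr rfl fun j _ => ?_
            have h4 : ∑ i, ((A *ᵥ (fun l => V l j.1)) i / τ j.1) * ((A *ᵥ (fun l => V l j.1)) i / τ j.1)
                = ((A *ᵥ (fun l => V l j.1)) ⬝ᵥ (A *ᵥ (fun l => V l j.1))) / (τ j.1)^2 := by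
              simp only [dotProduct, pow_two, Finset.sum_div]
              exact Finset.sum_congr rfl fun i _ => by ring
            rw [h4, hτsq, dotAV A V μ hVV heig, if_pos rfl]
            have hs := (hσpos j.1 j.2).ne'
            rw [div_eq_iff hs, ← pow_two, hσsq]
    rw [hB, hC, sum_subtype_ext (fun j => μ j ≠ 0) σ
      (fun j hj => by simp only [hσ]; rw [not_not.mp hj, Real.sqrt_zero])]
    ring

lemma core_bound (hVV : Vᵀ * V = 1) (hVV' : V * Vᵀ = 1) (hμ : ∀ j, 0 ≤ μ j)
    (heig : ∀ j, (Aᵀ * A) *ᵥ (fun i => V i j) = μ j • (fun i => V i j))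
    (C : Matrix (Fin M) (Fin P) ℝ) (B : Matrix (Fin N) (Fin P) ℝ) (hAB : A = C * Bᵀ) :
    ∑ j, Real.sqrt (μ j) ≤ (1/2) * (frobSq B + frobSq C) := by
  classical
  set σ : Fin N → ℝ := fun j => Real.sqrt (μ j) with hσ
  set u : Fin N → Fin M → ℝ := fun j i => (A *ᵥ (fun l => V l j)) i / σ j with hu
  have hσpos : ∀ j : Fin N, μ j ≠ 0 → 0 < σ j :=
    fun j hj => Real.sqrt_pos.mpr (lt_of_le_of_ne (hμ j) (Ne.symm hj))
  have hσsq : ∀ j, σ j ^ 2 = μ j := fun j => Real.sq_sqrt (hμ j)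
  -- orthonormality of the u's
  have huu : ∀ j j' : Fin N, μ j ≠ 0 → μ j' ≠ 0 →
      u j ⬝ᵥ u j' = if j = j' then (1:ℝ) else 0 := by
    intro j j' hj hj'
    have h1 : u j ⬝ᵥ u j'
        = ((A *ᵥ (fun l => V l j)) ⬝ᵥ (A *ᵥ (fun l => V l j'))) / (σ j * σ j') := by
      simp only [hu, dotProduct, Finset.sum_div]
      exact Finset.sum_congr rfl fun i _ => by ring
    rw [h1, dotAV A V μ hVV heig]
    by_cases h : j = j'
    · subst h
      rw [if_pos rfl, if_pos rfl, ← pow_two, hσsq, div_self hj]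
    · rw [if_neg h, if_neg h, zero_div]
  -- sigma as a cross inner product
  have hσdot : ∀ j : Fin N, μ j ≠ 0 →
      σ j = (Cᵀ *ᵥ u j) ⬝ᵥ (Bᵀ *ᵥ (fun i => V i j)) := by
    intro j hj
    rw [dot_fact, ← hAB]
    have h1 : u j ⬝ᵥ (A *ᵥ (fun i => V i j))
        = ((A *ᵥ (fun l => V l j)) ⬝ᵥ (A *ᵥ (fun l => V l j))) / σ j := by
      simp only [hu, dotProduct, Finset.sum_div]
      exact Finset.sum_congr rfl fun i _ => by ring
    rw [h1, dotAV A V μ hVV heig, if_pos rfl, ← hσsq j, pow_two,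
      mul_div_assoc, div_self (hσpos j hj).ne', mul_one]
  -- step 1 : restrict to nonzero eigenvalues
  have step1 : ∑ j, σ j = ∑ j : {j // μ j ≠ 0}, σ j.1 :=
    (sum_subtype_ext (fun j => μ j ≠ 0) σ
      (fun j hj => by simp only [hσ]; rw [not_not.mp hj, Real.sqrt_zero])).symm
  -- step 2 : per-term bound
  have step2 : ∑ j : {j // μ j ≠ 0}, σ j.1 ≤
      (1/2) * ((∑ j : {j // μ j ≠ 0}, (Cᵀ *ᵥ u j.1) ⬝ᵥ (Cᵀ *ᵥ u j.1))
        + (∑ j : {j // μ j ≠ 0}, (Bᵀ *ᵥ (fun i => V i j.1)) ⬝ᵥ (Bᵀ *ᵥ (fun i => V i j.1)))) := by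
    rw [← Finset.sum_add_distrib, Finset.mul_sum]
    refine Finset.sum_le_sum fun j _ => ?_
    rw [hσdot j.1 j.2]
    exact dot_le_half _ _
  -- step 3 : B side
  have step3 : (∑ j : {j // μ j ≠ 0}, (Bᵀ *ᵥ (fun i => V i j.1)) ⬝ᵥ (Bᵀ *ᵥ (fun i => V i j.1)))
      ≤ frobSq B := by
    have h1 : (∑ j : {j // μ j ≠ 0}, (Bᵀ *ᵥ (fun i => V i j.1)) ⬝ᵥ (Bᵀ *ᵥ (fun i => V i j.1)))
        ≤ ∑ j, (Bᵀ *ᵥ (fun i => V i j)) ⬝ᵥ (Bᵀ *ᵥ (fun i => V i j)) :=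
      sum_subtype_le (fun j => μ j ≠ 0)
        (fun j => (Bᵀ *ᵥ (fun i => V i j)) ⬝ᵥ (Bᵀ *ᵥ (fun i => V i j)))
        (fun j => Finset.sum_nonneg fun i _ => mul_self_nonneg _)
    refine h1.trans_eq ?_
    have h2 : ∀ j, (Bᵀ *ᵥ (fun i => V i j)) ⬝ᵥ (Bᵀ *ᵥ (fun i => V i j))
        = (fun i => V i j) ⬝ᵥ ((B * Bᵀ) *ᵥ (fun i => V i j)) := by
      intro j
      rw [dot_mulVec_mulVec Bᵀ, transpose_transpose]
    calc ∑ j, (Bᵀ *ᵥ (fun i => V i j)) ⬝ᵥ (Bᵀ *ᵥ (fun i => V i j))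
        = ∑ j, (fun i => V i j) ⬝ᵥ ((B * Bᵀ) *ᵥ (fun i => V i j)) :=
          Finset.sum_congr rfl fun j _ => h2 j
      _ = Matrix.trace (Vᵀ * (B * Bᵀ) * V) := sum_quadform V (B * Bᵀ)
      _ = Matrix.trace (V * Vᵀ * (B * Bᵀ)) := trace_mul_cycle Vᵀ (B * Bᵀ) V
      _ = frobSq B := by rw [hVV', Matrix.one_mul, trace_mul_transpose_self]
  -- step 4 : C side
  have step4 : (∑ j : {j // μ j ≠ 0}, (Cᵀ *ᵥ u j.1) ⬝ᵥ (Cᵀ *ᵥ u j.1)) ≤ frobSq C := by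
    set G : Matrix (Fin M) (Fin M) ℝ := C * Cᵀ with hG
    set Q : Matrix (Fin M) (Fin M) ℝ := ∑ j : {j // μ j ≠ 0}, vecMulVec (u j.1) (u j.1) with hQ
    have hsum : (∑ j : {j // μ j ≠ 0}, (Cᵀ *ᵥ u j.1) ⬝ᵥ (Cᵀ *ᵥ u j.1)) = Matrix.trace (G * Q) := by
      rw [hQ, Finset.mul_sum, trace_sum]
      refine Finset.sum_congr rfl fun j _ => ?_
      rw [trace_mul_vecMulVec, dot_mulVec_mulVec Cᵀ, transpose_transpose, hG]
    have hQQ : Q * Q = Q := by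
      rw [hQ, Finset.sum_mul_sum]
      calc (∑ j : {j // μ j ≠ 0}, ∑ j' : {j // μ j ≠ 0},
              vecMulVec (u j.1) (u j.1) * vecMulVec (u j'.1) (u j'.1))
          = ∑ j : {j // μ j ≠ 0}, ∑ j' : {j // μ j ≠ 0},
              (if j = j' then (1:ℝ) else 0) • vecMulVec (u j.1) (u j'.1) := by
            refine Finset.sum_congr rfl fun j _ => Finset.sum_congr rfl fun j' _ => ?_
            rw [vecMulVec_mul_vecMulVec, huu j.1 j'.1 j.2 j'.2]
            congr 1
            simp [Subtype.ext_iff]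
        _ = ∑ j : {j // μ j ≠ 0}, vecMulVec (u j.1) (u j.1) := by
            refine Finset.sum_congr rfl fun j _ => ?_
            rw [Finset.sum_congr rfl (fun j' _ => by
              rw [ite_smul, one_smul, zero_smul] :
                ∀ j' ∈ Finset.univ, (if j = j' then (1:ℝ) else 0) • vecMulVec (u j.1) (u j'.1)
                  = if j = j' then vecMulVec (u j.1) (u j'.1) else 0)]
            exact Finset.sum_ite_eq Finset.univ j _ |>.trans (by simp)
    have hQT : Qᵀ = Q := by
      rw [hQ, transpose_sum]
      exact Finset.sum_congr rfl fun j _ => vecMulVec_self_transpose _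
    set R : Matrix (Fin M) (Fin M) ℝ := 1 - Q with hR
    have hRR : R * R = R := by
      have h5 : R * R = 1 - Q - Q + Q * Q := by rw [hR]; noncomm_ring
      rw [h5, hQQ, hR]; abel
    have hRT : Rᵀ = R := by rw [hR, transpose_sub, transpose_one, hQT]
    have htr : Matrix.trace G - Matrix.trace (G * Q) = Matrix.trace ((R * C) * (R * C)ᵀ) := by
      have h6 : Matrix.trace (G * R) = Matrix.trace G - Matrix.trace (G * Q) := by
        rw [hR, Matrix.mul_sub, Matrix.mul_one, trace_sub]
      have h7 : (R * C) * (R * C)ᵀ = (R * G) * R := by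
        rw [transpose_mul, hRT, hG]
        simp only [Matrix.mul_assoc]
      have h8 : Matrix.trace (G * R) = Matrix.trace ((R * C) * (R * C)ᵀ) := by
        conv_lhs => rw [← hRR]
        rw [← Matrix.mul_assoc, trace_mul_cycle G R R, ← h7]
      rw [← h6, h8]
    have hnn := trace_mul_transpose_nonneg (R * C)
    have hGfrob : Matrix.trace G = frobSq C := by rw [hG, trace_mul_transpose_self]
    rw [hsum]
    linarith [htr, hnn, hGfrob]
  calc ∑ j, σ j = ∑ j : {j // μ j ≠ 0}, σ j.1 := step1
    _ ≤ _ := step2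
    _ ≤ (1/2) * (frobSq B + frobSq C) := by
      have hfb := step3
      have hfc := step4
      nlinarith [step3, step4]

end core


/-- Attainment of the nuclear-norm factorization bound: if `rank A ≤ P`, some
factorization `A = C Bᵀ` attains `(1/2)(‖B‖_F² + ‖C‖_F²) = ‖A‖_*`;
consequently `‖A‖_*` is the minimum of `(1/2)(‖B‖_F² + ‖C‖_F²)` over all
factorizations `A = C Bᵀ` with `C ∈ ℝ^{M×P}`, `B ∈ ℝ^{N×P}`. -/
theorem nuclearNorm_factorization_attained (M N P : ℕ)
    (A : Matrix (Fin M) (Fin N) ℝ) (hrank : A.rank ≤ P) :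
    (∃ (C : Matrix (Fin M) (Fin P) ℝ) (B : Matrix (Fin N) (Fin P) ℝ),
        A = C * Bᵀ ∧ (1 / 2) * (frobSq B + frobSq C) = nuclearNorm A) ∧
      ∀ (C : Matrix (Fin M) (Fin P) ℝ) (B : Matrix (Fin N) (Fin P) ℝ),
        A = C * Bᵀ → nuclearNorm A ≤ (1 / 2) * (frobSq B + frobSq C) := by
  classical
  have hsd := Matrix.posSemidef_conjTranspose_mul_self A
  set hH := hsd.1 with hhH
  set W := hH.eigenvectorUnitary with hW
  set V : Matrix (Fin N) (Fin N) ℝ := (W : Matrix (Fin N) (Fin N) ℝ) with hVdef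
  set μ : Fin N → ℝ := hH.eigenvalues with hμdef
  have hVV : Vᵀ * V = 1 := by
    have h := mem_unitaryGroup_iff'.mp W.2
    rwa [star_eq_conjTranspose, conjTranspose_eq_transpose_of_trivial] at h
  have hVV' : V * Vᵀ = 1 := by
    have h := mem_unitaryGroup_iff.mp W.2
    rwa [star_eq_conjTranspose, conjTranspose_eq_transpose_of_trivial] at h
  have hμ : ∀ j, 0 ≤ μ j := fun j => hsd.eigenvalues_nonneg j
  have hAA : Aᴴ * A = Aᵀ * A := by rw [conjTranspose_eq_transpose_of_trivial]
  have heig : ∀ j, (Aᵀ * A) *ᵥ (fun i => V i j) = μ j • (fun i => V i j) := by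
    intro j
    have h := hH.mulVec_eigenvectorBasis j
    have hcol : (fun i => V i j) = ⇑(hH.eigenvectorBasis j) := by
      funext i
      exact hH.eigenvectorUnitary_apply i j
    rw [hcol]
    rw [← hAA]
    exact h
  have hcard : Fintype.card {j // μ j ≠ 0} ≤ P := by
    have h1 := hH.rank_eq_card_non_zero_eigs
    have h2 := rank_conjTranspose_mul_self A
    simp only [← hμdef] at h1
    omega
  have hnuc : nuclearNorm A = ∑ j, Real.sqrt (μ j) := by
    simp only [nuclearNorm]
    rw [trace_unit_conj]
    simp [RCLike.ofReal_real_eq_id]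
    rfl
  constructor
  · obtain ⟨C, B, hCB, hval⟩ := core_exists A V μ hVV hVV' hμ heig hcard
    exact ⟨C, B, hCB, by rw [hnuc]; exact hval⟩
  · intro C B hCB
    rw [hnuc]
    exact core_bound A V μ hVV hVV' hμ heig C B hCB
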